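/- arXiv:1506.07248 — 3 statements merged into one kernel-verified Lean document; each statement's English description precedes it below -/
import Mathlib

section
/- Let C_n be a cycle and p ≥ 3. Any packing coloring of the generalized corona C_n ⊙ pK_1 that assigns color 1 to some vertex of the cycle must use at least p+3 colors. -/
open SimpleGraph

/-- A packing `k`-coloring of a graph: colors in `{1,…,k}`, and distinct vertices
with the same color `i` are at distance greater than `i`. -/
def IsPackingColoring {V : Type*} (G : SimpleGraph V) (k : ℕ) (c : V → ℕ) : Prop :=
  (∀ v, 1 ≤ c v ∧ c v ≤ k) ∧
  ∀ u v : V, u ≠ v → c u = c v → (c u : ℕ∞) < G.edist u v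

/-- The packing chromatic number. -/
noncomputable def packingChromaticNumber {V : Type*} (G : SimpleGraph V) : ℕ :=
  sInf {k | ∃ c, IsPackingColoring G k c}

/-- The generalized corona `G ⊙ pK₁`: add `p` pendant neighbors to each vertex. -/
def genCorona {V : Type*} (G : SimpleGraph V) (p : ℕ) : SimpleGraph (V ⊕ V × Fin p) where
  Adj x y :=
    (∃ u v, x = Sum.inl u ∧ y = Sum.inl v ∧ G.Adj u v) ∨
    (∃ u j, x = Sum.inl u ∧ y = Sum.inr (u, j)) ∨
    (∃ u j, x = Sum.inr (u, j) ∧ y = Sum.inl u)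
  symm := by
    refine ⟨?_⟩
    rintro x y (⟨u, v, rfl, rfl, h⟩ | ⟨u, j, rfl, rfl⟩ | ⟨u, j, rfl, rfl⟩)
    · exact Or.inl ⟨v, u, rfl, rfl, h.symm⟩
    · exact Or.inr (Or.inr ⟨u, j, rfl, rfl⟩)
    · exact Or.inr (Or.inl ⟨u, j, rfl, rfl⟩)
  loopless := by
    refine ⟨?_⟩
    rintro x (⟨u, v, rfl, h1, h⟩ | ⟨u, j, rfl, h1⟩ | ⟨u, j, rfl, h1⟩)
    · cases h1; exact G.irrefl h
    · exact absurd h1 (by simp)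
    · exact absurd h1 (by simp)

/-- `A` is an orientation of `G`: each edge gets exactly one direction. -/
def IsOrientation {V : Type*} (G : SimpleGraph V) (A : V → V → Prop) : Prop :=
  (∀ u v, A u v → ¬ A v u) ∧ (∀ u v, G.Adj u v ↔ (A u v ∨ A v u))

/-- Existence of a directed path of length `n` from `u` to `v`. -/
def DPath {V : Type*} (A : V → V → Prop) : ℕ → V → V → Prop
  | 0, u, v => u = v
  | (n+1), u, v => ∃ w, A u w ∧ DPath A n w v

/-- The weak directed distance: length of a shortest directed path joining `u` and `v`
in either direction. -/
noncomputable def wdist {V : Type*} (A : V → V → Prop) (u v : V) : ℕ∞ :=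
  sInf {m : ℕ∞ | ∃ n : ℕ, m = n ∧ (DPath A n u v ∨ DPath A n v u)}

/-- A packing `k`-coloring of a digraph, w.r.t. the weak directed distance. -/
def IsDPackingColoring {V : Type*} (A : V → V → Prop) (k : ℕ) (c : V → ℕ) : Prop :=
  (∀ v, 1 ≤ c v ∧ c v ≤ k) ∧
  ∀ u v : V, u ≠ v → c u = c v → (c u : ℕ∞) < wdist A u v

/-- The packing chromatic number of a digraph. -/
noncomputable def dPackingChromaticNumber {V : Type*} (A : V → V → Prop) : ℕ :=
  sInf {k | ∃ c, IsDPackingColoring A k c}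

/-- A source: no incoming arcs. -/
def IsSource {V : Type*} (A : V → V → Prop) (v : V) : Prop := ∀ u, ¬ A u v

/-- A sink: no outgoing arcs. -/
def IsSink {V : Type*} (A : V → V → Prop) (v : V) : Prop := ∀ u, ¬ A v u

theorem packing_coloring_corona_cycle_color_one (n p k : ℕ) (hn : 3 ≤ n) (hp : 3 ≤ p)
    (c : Fin n ⊕ Fin n × Fin p → ℕ)
    (hc : IsPackingColoring (genCorona (cycleGraph n) p) k c)
    (i : Fin n) (hci : c (Sum.inl i) = 1) :
    p + 3 ≤ k := by
  obtain ⟨m, rfl⟩ : ∃ m, n = m + 3 := ⟨n - 3, by omega⟩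
  set H := genCorona (cycleGraph (m+3)) p with hH
  -- the p+2 neighbors of `inl i`
  let N : Option (Option (Fin p)) → Fin (m+3) ⊕ Fin (m+3) × Fin p := fun x =>
    match x with
    | none => Sum.inl (i + 1)
    | some none => Sum.inl (i - 1)
    | some (some j) => Sum.inr (i, j)
  have hne2 : (i + 1 : Fin (m+3)) ≠ i - 1 := by
    intro h
    have h2 : i + 2 = i + 0 := by
      rw [add_zero]
      calc i + 2 = (i+1)+1 := by open Fin.CommRing in ring
      _ = (i-1)+1 := by rw [h]
      _ = i := by open Fin.CommRing in ring
    have h20 : (2 : Fin (m+3)) = 0 := add_left_cancel h2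
    have := congrArg Fin.val h20
    simp [Fin.val_two] at this
    rw [Nat.mod_eq_of_lt (by omega)] at this
    omega
  have hadjp : (cycleGraph (m+3)).Adj i (i+1) := by
    rw [cycleGraph_adj']; right; simp [add_sub_cancel_left]
  have hadjm : (cycleGraph (m+3)).Adj i (i-1) := by
    rw [cycleGraph_adj']; left; simp [sub_sub_cancel]
  have hNinj : Function.Injective N := by
    rintro (_ | _ | a) (_ | _ | b) hab <;>
      simp only [N, Sum.inl.injEq, Sum.inr.injEq, Prod.mk.injEq, reduceCtorEq] at hab
    · rfl
    · exact absurd hab hne2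
    · exact absurd hab.symm hne2
    · rfl
    · simp [hab.2]
  have hadj : ∀ x, H.Adj (Sum.inl i) (N x) := by
    rintro (_ | _ | j)
    · exact Or.inl ⟨i, i+1, rfl, rfl, hadjp⟩
    · exact Or.inl ⟨i, i-1, rfl, rfl, hadjm⟩
    · exact Or.inr (Or.inl ⟨i, j, rfl, rfl⟩)
  have hed1 : ∀ x, H.edist (Sum.inl i) (N x) = 1 := fun x =>
    edist_eq_one_iff_adj.mpr (hadj x)
  -- colors of neighbors are ≥ 2
  have hge2 : ∀ x, 2 ≤ c (N x) := by
    intro x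
    rcases (hc.1 (N x)).1.lt_or_eq with h | h
    · omega
    · exfalso
      have hne : Sum.inl i ≠ N x := (hadj x).ne
      have := hc.2 (Sum.inl i) (N x) hne (by omega)
      rw [hci, hed1 x] at this
      exact absurd this (by norm_num)
  -- colors of neighbors are pairwise distinct
  have hinj : ∀ x y, x ≠ y → c (N x) ≠ c (N y) := by
    intro x y hxy hcc
    have hNe : N x ≠ N y := fun h => hxy (hNinj h)
    have hlt := hc.2 (N x) (N y) hNe hcc
    have htri : H.edist (N x) (N y) ≤ 2 := by
      calc H.edist (N x) (N y) ≤ H.edist (N x) (Sum.inl i) + H.edist (Sum.inl i) (N y) :=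
        SimpleGraph.edist_triangle
      _ = 1 + 1 := by rw [SimpleGraph.edist_comm, hed1 x, hed1 y]
      _ = 2 := by norm_num
    have h2 : (2 : ℕ∞) ≤ (c (N x) : ℕ∞) := by exact_mod_cast hge2 x
    exact absurd (h2.trans_lt (hlt.trans_le htri)) (by norm_num)
  -- count
  have hcard : (Finset.univ : Finset (Option (Option (Fin p)))).card ≤ (Finset.Icc 2 k).card := by
    apply Finset.card_le_card_of_injOn (fun x => c (N x))
    · intro x _
      simp only [Finset.mem_Icc]
      exact Finset.mem_Icc.mpr ⟨hge2 x, (hc.1 (N x)).2⟩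
    · intro x _ y _ h
      by_contra hxy
      exact hinj x y hxy h
  simp [Nat.card_Icc] at hcard
  omega
end

section
/- The packing chromatic number of P_n ⊙ 3K_1 equals 2 if n = 1, 3 if n = 2, 4 if n ∈ {3,4}, 5 if 5 ≤ n ≤ 8, and 6 if n ≥ 9. -/
open SimpleGraph

namespace CPX


def pen (m : ℕ) : ℕ := if m % 4 = 0 then 0 else 1

def vD (m m' : ℕ) : ℕ := Nat.dist (m/4) (m'/4) + pen m + pen m'

def Good (n k : ℕ) (f : ℕ → ℕ) : Prop :=
  (∀ m < 4*n, 1 ≤ f m ∧ f m ≤ k) ∧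
  ∀ m < 4*n, ∀ m' < 4*n, m ≠ m' → f m = f m' → f m < vD m m'

variable {n : ℕ}

abbrev CG (n : ℕ) := genCorona (pathGraph n) 3

abbrev V' (n : ℕ) := Fin n ⊕ Fin n × Fin 3

lemma cg_adj (u v : V' n) : (CG n).Adj u v ↔
    ((∃ a b, u = Sum.inl a ∧ v = Sum.inl b ∧ (pathGraph n).Adj a b) ∨
    (∃ a j, u = Sum.inl a ∧ v = Sum.inr (a, j)) ∨
    (∃ a j, u = Sum.inr (a, j) ∧ v = Sum.inl a)) := Iff.rfl

def enc : V' n → ℕ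
  | Sum.inl i => 4 * i.val
  | Sum.inr (i, j) => 4 * i.val + j.val + 1

lemma enc_lt (u : V' n) : enc u < 4 * n := by
  rcases u with i | ⟨i, j⟩
  · have := i.isLt; simp only [enc]; omega
  · have := i.isLt; have := j.isLt; simp only [enc]; omega

lemma enc_inj (u v : V' n) (h : enc u = enc v) : u = v := by
  rcases u with i | ⟨i, j⟩ <;> rcases v with i' | ⟨i', j'⟩ <;>
    simp only [enc] at h
  · congr 1; exact Fin.ext (by omega)
  · exact absurd h (by have := j'.isLt; omega)
  · exact absurd h (by have := j.isLt; omega)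
  · have h1 : i.val = i'.val := by have := j.isLt; have := j'.isLt; omega
    have h2 : j.val = j'.val := by have := j.isLt; have := j'.isLt; omega
    congr 1
    exact Prod.ext (Fin.ext h1) (Fin.ext h2)

lemma step_arith (m x t : ℕ)
    (h : (m % 4 = 0 ∧ x % 4 = 0 ∧ Nat.dist (m/4) (x/4) = 1) ∨
         (m / 4 = x / 4 ∧ (m % 4 = 0 ∨ x % 4 = 0))) :
    (if m = t then 0 else vD m t) ≤ (if x = t then 0 else vD x t) + 1 := by
  simp only [vD, pen, Nat.dist] at *
  split_ifs at * <;> omega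

lemma vD_step {u x v : V' n} (h : (CG n).Adj u x) :
    (if enc u = enc v then 0 else vD (enc u) (enc v)) ≤
      (if enc x = enc v then 0 else vD (enc x) (enc v)) + 1 := by
  apply step_arith
  rw [cg_adj] at h
  rcases h with ⟨a, b, rfl, rfl, hab⟩ | ⟨a, j, rfl, rfl⟩ | ⟨a, j, rfl, rfl⟩
  · rw [pathGraph_adj] at hab
    simp only [enc, Nat.dist]
    left; omega
  · have := j.isLt; simp only [enc]; right; omega
  · have := j.isLt; simp only [enc]; right; omega

lemma vD_le_walk {u v : V' n} (w : (CG n).Walk u v) :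
    (if enc u = enc v then 0 else vD (enc u) (enc v)) ≤ w.length := by
  induction w with
  | nil => simp
  | @cons a b c hadj q ih =>
    have := vD_step (v := c) hadj
    simp only [Walk.length_cons]
    omega

lemma vD_le_edist {u v : V' n} (h : u ≠ v) :
    (vD (enc u) (enc v) : ℕ∞) ≤ (CG n).edist u v := by
  have hne : enc u ≠ enc v := fun he => h (enc_inj _ _ he)
  have hid : (CG n).edist u v = ⨅ w : (CG n).Walk u v, (w.length : ℕ∞) := rfl
  rw [hid]
  refine le_iInf fun w => ?_
  have := vD_le_walk w
  rw [if_neg hne] at this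
  exact_mod_cast this

lemma adj_edist_le {u v : V' n} (h : (CG n).Adj u v) : (CG n).edist u v ≤ 1 := by
  have := edist_le (Walk.cons h (Walk.nil))
  simpa using this

lemma path_edist (d : ℕ) : ∀ i j : Fin n, Nat.dist i.val j.val = d →
    (CG n).edist (Sum.inl i) (Sum.inl j) ≤ (d : ℕ∞) := by
  induction d with
  | zero =>
    intro i j hd
    have : i = j := Fin.ext (by simp [Nat.dist] at hd; omega)
    subst this; simp [edist_self]
  | succ d ih =>
    intro i j hd
    rcases Nat.lt_or_ge i.val j.val with hlt | hge
    · have hi' : i.val + 1 < n := by have := j.isLt; omega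
      set i' : Fin n := ⟨i.val + 1, hi'⟩ with hi'def
      have hadj : (CG n).Adj (Sum.inl i) (Sum.inl i') := by
        rw [cg_adj]; exact Or.inl ⟨i, i', rfl, rfl, pathGraph_adj.mpr (Or.inl rfl)⟩
      have hd' : Nat.dist i'.val j.val = d := by
        show Nat.dist (i.val + 1) j.val = d; unfold Nat.dist at hd ⊢; omega
      calc (CG n).edist (Sum.inl i) (Sum.inl j)
          ≤ (CG n).edist (Sum.inl i) (Sum.inl i') + (CG n).edist (Sum.inl i') (Sum.inl j) :=
            SimpleGraph.edist_triangle
        _ ≤ 1 + (d : ℕ∞) := add_le_add (adj_edist_le hadj) (ih i' j hd')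
        _ = ((d + 1 : ℕ) : ℕ∞) := by push_cast; ring
    · have hne : i.val ≠ j.val := by simp [Nat.dist] at hd; omega
      have hj : 0 < i.val := by omega
      have hi' : i.val - 1 < n := by have := i.isLt; omega
      set i' : Fin n := ⟨i.val - 1, hi'⟩ with hi'def
      have hadj : (CG n).Adj (Sum.inl i) (Sum.inl i') := by
        rw [cg_adj]; exact Or.inl ⟨i, i', rfl, rfl, pathGraph_adj.mpr (Or.inr (by show i.val - 1 + 1 = i.val; omega))⟩
      have hd' : Nat.dist i'.val j.val = d := by
        show Nat.dist (i.val - 1) j.val = d; unfold Nat.dist at hd ⊢; omega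
      calc (CG n).edist (Sum.inl i) (Sum.inl j)
          ≤ (CG n).edist (Sum.inl i) (Sum.inl i') + (CG n).edist (Sum.inl i') (Sum.inl j) :=
            SimpleGraph.edist_triangle
        _ ≤ 1 + (d : ℕ∞) := add_le_add (adj_edist_le hadj) (ih i' j hd')
        _ = ((d + 1 : ℕ) : ℕ∞) := by push_cast; ring

lemma leaf_adj (i : Fin n) (j : Fin 3) : (CG n).Adj (Sum.inl i) (Sum.inr (i, j)) := by
  rw [cg_adj]; exact Or.inr (Or.inl ⟨i, j, rfl, rfl⟩)

lemma edist_le_vD {u v : V' n} (h : u ≠ v) :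
    (CG n).edist u v ≤ (vD (enc u) (enc v) : ℕ∞) := by
  have hp : ∀ (i j : Fin n), (CG n).edist (Sum.inl i) (Sum.inl j) ≤ (Nat.dist i.val j.val : ℕ∞) :=
    fun i j => path_edist _ i j rfl
  have henc : ∀ (i j : Fin n), vD (enc (Sum.inl i : V' n)) (enc (Sum.inl j : V' n))
      = Nat.dist i.val j.val := by
    intro i j; dsimp only [vD, pen, enc, Nat.dist]; split_ifs <;> omega
  rcases u with i | ⟨i, a⟩ <;> rcases v with j | ⟨j, b⟩
  · rw [henc]; exact hp i j
  · calc (CG n).edist (Sum.inl i) (Sum.inr (j, b))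
        ≤ (CG n).edist (Sum.inl i) (Sum.inl j) + (CG n).edist (Sum.inl j) (Sum.inr (j, b)) :=
          SimpleGraph.edist_triangle
      _ ≤ (Nat.dist i.val j.val : ℕ∞) + 1 := add_le_add (hp i j) (adj_edist_le (leaf_adj j b))
      _ = ((Nat.dist i.val j.val + 1 : ℕ) : ℕ∞) := by push_cast; ring
      _ = _ := by
          congr 1
          dsimp only [vD, pen, enc, Nat.dist]
          have := b.isLt; split_ifs <;> omega
  · calc (CG n).edist (Sum.inr (i, a)) (Sum.inl j)
        ≤ (CG n).edist (Sum.inr (i, a)) (Sum.inl i) + (CG n).edist (Sum.inl i) (Sum.inl j) :=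
          SimpleGraph.edist_triangle
      _ ≤ 1 + (Nat.dist i.val j.val : ℕ∞) :=
          add_le_add (by rw [SimpleGraph.edist_comm]; exact adj_edist_le (leaf_adj i a)) (hp i j)
      _ = ((Nat.dist i.val j.val + 1 : ℕ) : ℕ∞) := by push_cast; ring
      _ = _ := by
          congr 1
          dsimp only [vD, pen, enc, Nat.dist]
          have := a.isLt; split_ifs <;> omega
  · calc (CG n).edist (Sum.inr (i, a)) (Sum.inr (j, b))
        ≤ (CG n).edist (Sum.inr (i, a)) (Sum.inl i) + ((CG n).edist (Sum.inl i) (Sum.inl j)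
            + (CG n).edist (Sum.inl j) (Sum.inr (j, b))) :=
          le_trans SimpleGraph.edist_triangle (by
            exact add_le_add_right SimpleGraph.edist_triangle _)
      _ ≤ 1 + ((Nat.dist i.val j.val : ℕ∞) + 1) := by
          refine add_le_add ?_ (add_le_add (hp i j) (adj_edist_le (leaf_adj j b)))
          rw [SimpleGraph.edist_comm]; exact adj_edist_le (leaf_adj i a)
      _ = ((Nat.dist i.val j.val + 2 : ℕ) : ℕ∞) := by push_cast; ring
      _ = _ := by
          congr 1
          dsimp only [vD, pen, enc, Nat.dist]
          have := a.isLt; have := b.isLt; split_ifs <;> omega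

lemma edist_eq_vD {u v : V' n} (h : u ≠ v) :
    (CG n).edist u v = (vD (enc u) (enc v) : ℕ∞) :=
  le_antisymm (edist_le_vD h) (vD_le_edist h)

/-- decoding -/
def dec (m : ℕ) (h : m < 4 * n) : V' n :=
  if h0 : m % 4 = 0 then Sum.inl ⟨m / 4, by omega⟩
  else Sum.inr (⟨m / 4, by omega⟩, ⟨m % 4 - 1, by omega⟩)

lemma enc_dec (m : ℕ) (h : m < 4 * n) : enc (dec m h) = m := by
  unfold dec
  split_ifs with h0 <;> simp only [enc] <;> omega

lemma packing_to_good (k : ℕ) (c : V' n → ℕ)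
    (hc : IsPackingColoring (CG n) k c) : ∃ f, Good n k f := by
  refine ⟨fun m => if h : m < 4*n then c (dec m h) else 1, ?_, ?_⟩
  · intro m hm; dsimp only; rw [dif_pos hm]; exact hc.1 _
  · intro m hm m' hm' hne heq
    dsimp only at heq ⊢
    rw [dif_pos hm] at heq ⊢
    rw [dif_pos hm'] at heq
    have hdne : dec m hm ≠ dec m' hm' := by
      intro hdd
      exact hne (by rw [← enc_dec m hm, ← enc_dec m' hm', hdd])
    have := hc.2 _ _ hdne heq
    rw [edist_eq_vD hdne, enc_dec, enc_dec] at this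
    exact_mod_cast this

lemma good_to_packing (k : ℕ) (f : ℕ → ℕ) (hf : Good n k f) :
    ∃ c, IsPackingColoring (CG n) k c := by
  refine ⟨fun v => f (enc v), ?_, ?_⟩
  · intro v; exact hf.1 _ (enc_lt v)
  · intro u v hne heq
    have hene : enc u ≠ enc v := fun he => hne (enc_inj _ _ he)
    have := hf.2 _ (enc_lt u) _ (enc_lt v) hene heq
    rw [edist_eq_vD hne]
    exact_mod_cast this

lemma packing_iff_good (k : ℕ) :
    (∃ c, IsPackingColoring (CG n) k c) ↔ (∃ f, Good n k f) :=
  ⟨fun ⟨c, hc⟩ => packing_to_good k c hc, fun ⟨f, hf⟩ => good_to_packing k f hf⟩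




/-- check color `c` at vertex `t` against previously colored vertices
`q-1, q-2, ...` (colors listed most recent first), within window `w`. -/
def chkW (c t : ℕ) : ℕ → ℕ → List ℕ → Bool
  | _, 0, _ => true
  | _, _, [] => true
  | q, w+1, d :: rest =>
      (!(decide (d = c)) || decide (c < vD t (q-1))) && chkW c t (q-1) w rest

/-- DFS for a packing coloring, with leaf colors forced nondecreasing. -/
def srchS (k : ℕ) : ℕ → ℕ → List ℕ → Bool
  | 0, _, _ => true
  | fuel+1, pos, acc => (List.range k).any fun j =>
      (decide (pos % 4 ≤ 1) || decide (acc.headD 0 ≤ j+1)) &&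
      (chkW (j+1) pos pos 24 acc && srchS k fuel (pos+1) ((j+1) :: acc))

def SortedLeaves (f : ℕ → ℕ) : Prop :=
  ∀ m : ℕ, (m % 4 = 2 ∨ m % 4 = 3) → f (m-1) ≤ f m

lemma chkW_sound (f : ℕ → ℕ) (c t : ℕ) :
    ∀ q, (∀ i, i < q → f i = c → c < vD t i) →
    ∀ w, chkW c t q w (((List.range q).map f).reverse) = true := by
  intro q
  induction q with
  | zero => intro _ w; cases w <;> simp [chkW]
  | succ q ih =>
    intro H w
    cases w with
    | zero => simp [chkW]
    | succ w =>
      rw [List.range_succ, List.map_append, List.reverse_append]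
      simp only [List.map_cons, List.map_nil, List.reverse_cons, List.reverse_nil,
        List.nil_append, List.singleton_append]
      show ((!(decide (f q = c)) || decide (c < vD t (q+1-1))) &&
        chkW c t (q+1-1) w (((List.range q).map f).reverse)) = true
      rw [Bool.and_eq_true]
      refine ⟨?_, by simpa using ih (fun i h1 h2 => H i (by omega) h2) w⟩
      rcases Decidable.em (f q = c) with h | h
      · simp [h, H q (by omega) h]
      · simp [h]

lemma srchS_sound (n k : ℕ) (f : ℕ → ℕ) (hf : Good n k f) (hs : SortedLeaves f) :
    ∀ fuel pos, pos + fuel = 4*n → srchS k fuel pos (((List.range pos).map f).reverse) = true := by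
  intro fuel
  induction fuel with
  | zero => intro pos _; simp [srchS]
  | succ fu ih =>
    intro pos hpos
    have hposlt : pos < 4*n := by omega
    obtain ⟨hc1, hc2⟩ := hf.1 pos hposlt
    rw [srchS, List.any_eq_true]
    refine ⟨f pos - 1, List.mem_range.mpr (by omega), ?_⟩
    have hfc : f pos - 1 + 1 = f pos := by omega
    rw [hfc]
    simp only [Bool.and_eq_true, Bool.or_eq_true]
    refine ⟨?_, ?_, ?_⟩
    · rcases Nat.lt_or_ge (pos % 4) 2 with h | h
      · left; simp; omega
      · right
        have hpos2 : 1 ≤ pos := by omega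
        have hhead : (((List.range pos).map f).reverse).headD 0 = f (pos - 1) := by
          obtain ⟨p, rfl⟩ : ∃ p, pos = p + 1 := ⟨pos - 1, by omega⟩
          rw [List.range_succ, List.map_append, List.reverse_append]
          simp
        rw [hhead]
        simp only [decide_eq_true_eq]
        exact hs pos (by omega)
    · exact chkW_sound f (f pos) pos pos
        (fun i hilt hi =>
          hf.2 pos hposlt i (by omega) (by omega) hi.symm) 24
    · rw [show (f pos :: ((List.range pos).map f).reverse)
            = (((List.range (pos+1)).map f).reverse) by
          rw [List.range_succ, List.map_append, List.reverse_append]; simp]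
      exact ih (pos+1) (by omega)


/-- `g3 x y z r` : the value at slot `r ∈ {1,2,3}`. -/
def g3 (x y z r : ℕ) : ℕ := if r = 1 then x else if r = 2 then y else z

/-- The original slot of the `r`-th smallest among the three values. -/
def permIdx (x y z r : ℕ) : ℕ :=
  if x ≤ y then
    if y ≤ z then r
    else if x ≤ z then (if r = 1 then 1 else if r = 2 then 3 else 2)
    else (if r = 1 then 3 else if r = 2 then 1 else 2)
  else
    if x ≤ z then (if r = 1 then 2 else if r = 2 then 1 else 3)
    else if y ≤ z then (if r = 1 then 2 else if r = 2 then 3 else 1)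
    else (if r = 1 then 3 else if r = 2 then 2 else 1)

lemma permIdx_range (x y z r : ℕ) (h1 : 1 ≤ r) (h2 : r ≤ 3) :
    1 ≤ permIdx x y z r ∧ permIdx x y z r ≤ 3 := by
  unfold permIdx; split_ifs <;> omega

lemma permIdx_inj (x y z r r' : ℕ) (h1 : 1 ≤ r) (h2 : r ≤ 3) (h1' : 1 ≤ r') (h2' : r' ≤ 3)
    (h : permIdx x y z r = permIdx x y z r') : r = r' := by
  unfold permIdx at h; split_ifs at h <;> omega

set_option maxHeartbeats 1000000 in
lemma permIdx_sorted (F : ℕ → ℕ) (b : ℕ) :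
    F (b + permIdx (F (b+1)) (F (b+2)) (F (b+3)) 1)
      ≤ F (b + permIdx (F (b+1)) (F (b+2)) (F (b+3)) 2) ∧
    F (b + permIdx (F (b+1)) (F (b+2)) (F (b+3)) 2)
      ≤ F (b + permIdx (F (b+1)) (F (b+2)) (F (b+3)) 3) := by
  unfold permIdx
  split_ifs with h1 h2 h3 h4 h5 <;> norm_num <;> omega

/-- per-group leaf sorting permutation of vertex indices. -/
def σf (f : ℕ → ℕ) (m : ℕ) : ℕ :=
  if m % 4 = 0 then m
  else 4*(m/4) + permIdx (f (4*(m/4)+1)) (f (4*(m/4)+2)) (f (4*(m/4)+3)) (m % 4)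

lemma σf_div (f : ℕ → ℕ) (m : ℕ) : σf f m / 4 = m / 4 := by
  unfold σf
  split_ifs with h
  · rfl
  · have hr : 1 ≤ m % 4 ∧ m % 4 ≤ 3 := by omega
    have := permIdx_range (f (4*(m/4)+1)) (f (4*(m/4)+2)) (f (4*(m/4)+3)) (m % 4) hr.1 hr.2
    omega

lemma σf_mod (f : ℕ → ℕ) (m : ℕ) :
    σf f m % 4 = if m % 4 = 0 then 0
      else permIdx (f (4*(m/4)+1)) (f (4*(m/4)+2)) (f (4*(m/4)+3)) (m % 4) := by
  unfold σf
  split_ifs with h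
  · omega
  · have hr : 1 ≤ m % 4 ∧ m % 4 ≤ 3 := by omega
    have := permIdx_range (f (4*(m/4)+1)) (f (4*(m/4)+2)) (f (4*(m/4)+3)) (m % 4) hr.1 hr.2
    omega

lemma σf_pen (f : ℕ → ℕ) (m : ℕ) : pen (σf f m) = pen m := by
  by_cases h : m % 4 = 0
  · unfold σf; rw [if_pos h]
  · have hr : 1 ≤ m % 4 ∧ m % 4 ≤ 3 := by omega
    have hp := permIdx_range (f (4*(m/4)+1)) (f (4*(m/4)+2)) (f (4*(m/4)+3)) (m % 4) hr.1 hr.2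
    unfold pen
    rw [σf_mod, if_neg h, if_neg (by omega), if_neg h]

lemma σf_inj (f : ℕ → ℕ) (m m' : ℕ) (h : σf f m = σf f m') : m = m' := by
  have hdiv : m / 4 = m' / 4 := by
    have := σf_div f m; have := σf_div f m'; omega
  have hmod : σf f m % 4 = σf f m' % 4 := by rw [h]
  rw [σf_mod, σf_mod, hdiv] at hmod
  have hmm : m % 4 = m' % 4 := by
    split_ifs at hmod with a b c
    · omega
    · have hr : 1 ≤ m' % 4 ∧ m' % 4 ≤ 3 := by omega
      have := permIdx_range (f (4*(m'/4)+1)) (f (4*(m'/4)+2)) (f (4*(m'/4)+3)) (m' % 4) hr.1 hr.2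
      omega
    · have hr : 1 ≤ m % 4 ∧ m % 4 ≤ 3 := by omega
      have := permIdx_range (f (4*(m'/4)+1)) (f (4*(m'/4)+2)) (f (4*(m'/4)+3)) (m % 4) hr.1 hr.2
      omega
    · exact permIdx_inj _ _ _ _ _ (by omega) (by omega) (by omega) (by omega) hmod
  omega

lemma vD_σf (f : ℕ → ℕ) (m m' : ℕ) : vD (σf f m) (σf f m') = vD m m' := by
  unfold vD
  rw [σf_div, σf_div, σf_pen, σf_pen]

lemma σf_lt (f : ℕ → ℕ) (m N : ℕ) (h : m < 4*N) : σf f m < 4*N := by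
  have h1 := σf_div f m
  have : σf f m % 4 < 4 := Nat.mod_lt _ (by norm_num)
  omega

lemma good_sorted (n k : ℕ) (h : ∃ f, Good n k f) :
    ∃ g, Good n k g ∧ SortedLeaves g := by
  obtain ⟨f, hf⟩ := h
  refine ⟨fun m => f (σf f m), ⟨?_, ?_⟩, ?_⟩
  · intro m hm; exact hf.1 _ (σf_lt f m n hm)
  · intro m hm m' hm' hne heq
    dsimp only at heq ⊢
    rw [← vD_σf f]
    exact hf.2 _ (σf_lt f m n hm) _ (σf_lt f m' n hm')
      (fun he => hne (σf_inj f _ _ he)) heq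
  · intro m hmod
    dsimp only
    have h4 : (m-1) % 4 = m % 4 - 1 := by omega
    have hdiv : (m-1) / 4 = m / 4 := by omega
    have hx := permIdx_sorted f (4*(m/4))
    unfold σf
    rw [if_neg (by omega), if_neg (by omega), hdiv, h4]
    have e1 : 4*(m/4)+1 = 4*(m/4)+1 := rfl
    rcases hmod with h2 | h3
    · rw [h2]
      exact hx.1
    · rw [h3]
      exact hx.2

lemma no_good (n k : ℕ) (h : srchS k (4*n) 0 [] = false) : ¬ ∃ f, Good n k f := by
  intro hex
  obtain ⟨g, hg, hs⟩ := good_sorted n k hex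
  have := srchS_sound n k g hg hs (4*n) 0 (by omega)
  simp only [List.range_zero, List.map_nil, List.reverse_nil] at this
  rw [h] at this
  exact Bool.false_ne_true this




def tblL : List ℕ :=
  [1,2,3,4, 5,1,1,1, 2,1,1,1, 3,1,1,1, 4,1,1,1, 2,1,1,1, 6,1,1,1,
   3,1,1,1, 2,1,1,1, 5,1,1,1, 4,1,1,1, 3,1,1,1, 2,1,1,1, 6,1,1,1]

def T (a r : ℕ) : ℕ := tblL.getD (4*a + r) 1

def fper (m : ℕ) : ℕ := T (m / 4 % 14) (m % 4)

lemma checkA : ∀ a < 14, ∀ r < 4, 1 ≤ T a r ∧ T a r ≤ 6 := by decide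

lemma checkB : ∀ a < 14, ∀ r < 4, ∀ s < 4, r ≠ s → T a r = T a s →
    T a r < (if r = 0 then 0 else 1) + (if s = 0 then 0 else 1) := by decide

lemma checkC : ∀ a < 14, ∀ b < 14, ∀ r < 4, ∀ s < 4, T a r = T b s →
    T a r < (if a = b then 14 else min (Nat.dist a b) (14 - Nat.dist a b))
      + (if r = 0 then 0 else 1) + (if s = 0 then 0 else 1) := by decide

lemma md1 (i i' : ℕ) (h : i ≠ i') (he : i % 14 = i' % 14) : 14 ≤ Nat.dist i i' := by
  simp only [Nat.dist]; omega

lemma md2 (i i' : ℕ) (h : i ≠ i') :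
    min (Nat.dist (i%14) (i'%14)) (14 - Nat.dist (i%14) (i'%14)) ≤ Nat.dist i i' := by
  simp only [Nat.dist, Nat.min_def]
  split_ifs <;> omega

lemma good_fper (n : ℕ) : Good n 6 fper := by
  constructor
  · intro m _
    exact checkA (m/4 % 14) (Nat.mod_lt _ (by norm_num)) (m % 4) (Nat.mod_lt _ (by norm_num))
  · intro m _ m' _ hne heq
    show fper m < vD m m'
    by_cases hii : m/4 = m'/4
    · have hrs : m % 4 ≠ m' % 4 := by omega
      have hB := checkB (m/4 % 14) (Nat.mod_lt _ (by norm_num)) (m % 4)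
        (Nat.mod_lt _ (by norm_num)) (m' % 4) (Nat.mod_lt _ (by norm_num)) hrs
        (by have h := heq; unfold fper at h; rw [hii] at h ⊢; exact h)
      unfold fper vD pen at *
      rw [hii, Nat.dist_self, Nat.zero_add]
      rw [hii] at hB
      exact hB
    · have hC := checkC (m/4 % 14) (Nat.mod_lt _ (by norm_num)) (m'/4 % 14)
        (Nat.mod_lt _ (by norm_num)) (m % 4) (Nat.mod_lt _ (by norm_num))
        (m' % 4) (Nat.mod_lt _ (by norm_num)) heq
      have hdist : (if m/4 % 14 = m'/4 % 14 then 14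
          else min (Nat.dist (m/4 % 14) (m'/4 % 14)) (14 - Nat.dist (m/4 % 14) (m'/4 % 14)))
          ≤ Nat.dist (m/4) (m'/4) := by
        split_ifs with hab
        · exact md1 _ _ hii hab
        · exact md2 _ _ hii
      have := lt_of_lt_of_le hC
        (add_le_add (add_le_add_left hdist _) (le_refl _))
      unfold fper vD pen
      exact this


instance goodDec (n k : ℕ) (f : ℕ → ℕ) : Decidable (Good n k f) := by
  unfold Good; infer_instance

lemma good_mono_k {n k k' : ℕ} {f : ℕ → ℕ} (h : k ≤ k') (hf : Good n k f) : Good n k' f :=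
  ⟨fun m hm => ⟨(hf.1 m hm).1, le_trans (hf.1 m hm).2 h⟩, hf.2⟩

lemma good_mono_n {n n' k : ℕ} {f : ℕ → ℕ} (h : n' ≤ n) (hf : Good n k f) : Good n' k f :=
  ⟨fun m hm => hf.1 m (by omega), fun m hm m' hm' => hf.2 m (by omega) m' (by omega)⟩

lemma chi_eq (n v : ℕ) (hup : ∃ f, Good n v f) (hlow : ¬ ∃ f, Good n (v-1) f) :
    packingChromaticNumber (genCorona (pathGraph n) 3) = v := by
  have hset : {k | ∃ c, IsPackingColoring (CG n) k c} = {k | ∃ f, Good n k f} :=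
    Set.ext fun k => packing_iff_good k
  show sInf {k | ∃ c, IsPackingColoring (CG n) k c} = v
  rw [hset]
  apply le_antisymm
  · exact Nat.sInf_le hup
  · apply le_csInf ⟨v, hup⟩
    intro k hk
    by_contra hlt
    push_neg at hlt
    exact hlow ⟨hk.choose, good_mono_k (by omega) hk.choose_spec⟩

lemma wit1 : Good 1 2 (fun m => ([2,1,1,1] : List ℕ).getD m 1) := by decide

lemma wit2 : Good 2 3 (fun m => ([2,1,1,1,3,1,1,1] : List ℕ).getD m 1) := by decide

lemma wit4 : Good 4 4 (fun m =>
    ([2,1,1,1,3,1,1,1,4,1,1,1,2,1,1,1] : List ℕ).getD m 1) := by decide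

set_option maxHeartbeats 1000000 in
lemma wit8 : Good 8 5 (fun m =>
    ([2,1,1,1,3,1,1,1,4,1,1,1,2,1,1,1,5,1,1,1,3,1,1,1,2,1,1,1,4,1,1,1] : List ℕ).getD m 1) := by
  decide

lemma s11 : srchS 1 4 0 [] = false := by decide
lemma s22 : srchS 2 8 0 [] = false := by decide
set_option maxRecDepth 100000 in
lemma s33 : srchS 3 12 0 [] = false := by decide
set_option maxRecDepth 1000000 in
set_option maxHeartbeats 4000000 in
lemma s54 : srchS 4 20 0 [] = false := by decide
set_option maxRecDepth 4000000 in
set_option maxHeartbeats 80000000 in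
lemma s95 : srchS 5 36 0 [] = false := by decide

end CPX

open CPX in
theorem packing_chromatic_corona_path_three (n : ℕ) :
    (n = 1 → packingChromaticNumber (genCorona (pathGraph n) 3) = 2) ∧
    (n = 2 → packingChromaticNumber (genCorona (pathGraph n) 3) = 3) ∧
    ((n = 3 ∨ n = 4) → packingChromaticNumber (genCorona (pathGraph n) 3) = 4) ∧
    ((5 ≤ n ∧ n ≤ 8) → packingChromaticNumber (genCorona (pathGraph n) 3) = 5) ∧
    (9 ≤ n → packingChromaticNumber (genCorona (pathGraph n) 3) = 6) := by
  refine ⟨?_, ?_, ?_, ?_, ?_⟩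
  · rintro rfl
    exact chi_eq 1 2 ⟨_, wit1⟩ (no_good 1 1 s11)
  · rintro rfl
    exact chi_eq 2 3 ⟨_, wit2⟩ (no_good 2 2 s22)
  · rintro (rfl | rfl)
    · exact chi_eq 3 4 ⟨_, good_mono_n (by norm_num) wit4⟩ (no_good 3 3 s33)
    · exact chi_eq 4 4 ⟨_, wit4⟩
        (fun ⟨f, hf⟩ => no_good 3 3 s33 ⟨f, good_mono_n (by norm_num) hf⟩)
  · rintro ⟨h5, h8⟩
    exact chi_eq n 5 ⟨_, good_mono_n h8 wit8⟩
      (fun ⟨f, hf⟩ => no_good 5 4 s54 ⟨f, good_mono_n h5 hf⟩)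
  · intro h9
    exact chi_eq n 6 ⟨_, good_fper n⟩
      (fun ⟨f, hf⟩ => no_good 9 5 s95 ⟨f, good_mono_n h9 hf⟩)
end

section
/- For every orientation P⃗_n of the path P_n (n ≥ 2), 2 ≤ χρ(P⃗_n) ≤ 3; moreover χρ(P⃗_n) = 2 if and only if one part of the bipartition of P_n contains only sources or sinks in P⃗_n. -/
open SimpleGraph

section AuxLemmas

lemma wdist_le_of_dpath {V : Type*} {A : V → V → Prop} {u v : V} {m : ℕ}
    (h : DPath A m u v ∨ DPath A m v u) : wdist A u v ≤ (m : ℕ∞) :=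
  sInf_le ⟨m, rfl, h⟩

lemma wdist_ge {V : Type*} {A : V → V → Prop} {u v : V} {d : ℕ}
    (h : ∀ m : ℕ, (DPath A m u v ∨ DPath A m v u) → d ≤ m) : (d : ℕ∞) ≤ wdist A u v := by
  apply le_sInf
  rintro x ⟨m, rfl, hm⟩
  exact_mod_cast h m hm

lemma wdist_comm {V : Type*} (A : V → V → Prop) (u v : V) : wdist A u v = wdist A v u := by
  unfold wdist
  congr 1
  ext m
  constructor <;> rintro ⟨k, rfl, h⟩ <;> exact ⟨k, rfl, h.symm⟩

lemma arc_adj {n : ℕ} {A : Fin n → Fin n → Prop} (hA : IsOrientation (pathGraph n) A)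
    {u v : Fin n} (h : A u v) : (u : ℕ) + 1 = v ∨ (v : ℕ) + 1 = u :=
  SimpleGraph.pathGraph_adj.mp ((hA.2 u v).mpr (Or.inl h))

lemma dpath_bound {n : ℕ} {A : Fin n → Fin n → Prop} (hA : IsOrientation (pathGraph n) A) :
    ∀ (m : ℕ) (u v : Fin n), DPath A m u v → (u : ℕ) ≤ v + m ∧ (v : ℕ) ≤ u + m := by
  intro m
  induction m with
  | zero => rintro u v rfl; omega
  | succ m ih =>
    rintro u v ⟨w, haw, hp⟩
    have h1 := arc_adj hA haw
    have h2 := ih w v hp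
    omega

lemma wdist_ge_dist {n : ℕ} {A : Fin n → Fin n → Prop} (hA : IsOrientation (pathGraph n) A)
    (u v : Fin n) {d : ℕ} (hd : d + (v : ℕ) ≤ u ∨ d + (u : ℕ) ≤ v) :
    (d : ℕ∞) ≤ wdist A u v := by
  apply wdist_ge
  intro m hm
  rcases hm with h | h
  · have := dpath_bound hA m u v h; omega
  · have := dpath_bound hA m v u h; omega

lemma wdist_ge_three {n : ℕ} {A : Fin n → Fin n → Prop} (hA : IsOrientation (pathGraph n) A)
    {u v : Fin n} (huv : (u : ℕ) + 2 = v)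
    (hw : ∀ w : Fin n, (w : ℕ) = (u : ℕ) + 1 → IsSource A w ∨ IsSink A w) :
    (3 : ℕ∞) ≤ wdist A u v := by
  have h3 : ((3 : ℕ) : ℕ∞) ≤ wdist A u v := by
    apply wdist_ge
    intro m hm
    have hb : 2 ≤ m := by
      rcases hm with h | h
      · have := dpath_bound hA m u v h; omega
      · have := dpath_bound hA m v u h; omega
    by_contra hlt
    have hm2 : m = 2 := by omega
    subst hm2
    rcases hm with ⟨w, h1, w', h2, he⟩ | ⟨w, h1, w', h2, he⟩
    · have e1 := arc_adj hA h1
      have e2 := arc_adj hA h2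
      rw [he] at e2
      have hwv : (w : ℕ) = (u : ℕ) + 1 := by omega
      rcases hw w hwv with hs | hs
      · exact hs u h1
      · exact hs w' h2
    · have e1 := arc_adj hA h1
      have e2 := arc_adj hA h2
      rw [he] at e2
      have hwv : (w : ℕ) = (u : ℕ) + 1 := by omega
      rcases hw w hwv with hs | hs
      · exact hs v h1
      · exact hs w' h2
  exact_mod_cast h3

lemma exists_three_coloring {n : ℕ} {A : Fin n → Fin n → Prop}
    (hA : IsOrientation (pathGraph n) A) : ∃ c, IsDPackingColoring A 3 c := by
  refine ⟨fun i => if (i : ℕ) % 4 = 1 then 2 else if (i : ℕ) % 4 = 3 then 3 else 1, ?_, ?_⟩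
  · intro v
    dsimp only
    constructor <;> split_ifs <;> omega
  · intro u v huv hc
    have hne : (u : ℕ) ≠ (v : ℕ) := fun h => huv (Fin.ext h)
    have hc' : (if (u : ℕ) % 4 = 1 then 2 else if (u : ℕ) % 4 = 3 then 3 else 1 : ℕ)
        = (if (v : ℕ) % 4 = 1 then 2 else if (v : ℕ) % 4 = 3 then 3 else 1 : ℕ) := hc
    have hgap :
        (if (u : ℕ) % 4 = 1 then 2 else if (u : ℕ) % 4 = 3 then 3 else 1 : ℕ) + 1 + (v : ℕ) ≤ u ∨
        (if (u : ℕ) % 4 = 1 then 2 else if (u : ℕ) % 4 = 3 then 3 else 1 : ℕ) + 1 + (u : ℕ) ≤ v := by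
      split_ifs at hc' ⊢ <;> omega
    have hle := wdist_ge_dist hA u v hgap
    show ((if (u : ℕ) % 4 = 1 then 2 else if (u : ℕ) % 4 = 3 then 3 else 1 : ℕ) : ℕ∞) < wdist A u v
    refine lt_of_lt_of_le ?_ hle
    exact_mod_cast Nat.lt_succ_self _

lemma coloring_of_s {n : ℕ} {A : Fin n → Fin n → Prop}
    (hA : IsOrientation (pathGraph n) A) {s : Set (Fin n)}
    (hs1 : ∀ u v : Fin n, (pathGraph n).Adj u v → (u ∈ s ↔ v ∉ s))
    (hs2 : ∀ v ∈ s, IsSource A v ∨ IsSink A v) :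
    ∃ c, IsDPackingColoring A 2 c := by
  classical
  refine ⟨fun v => if v ∈ s then 1 else 2, ?_, ?_⟩
  · intro v; dsimp only; split_ifs <;> omega
  · intro u v huv hc
    have hne : (u : ℕ) ≠ (v : ℕ) := fun h => huv (Fin.ext h)
    dsimp only at hc ⊢
    by_cases hu : u ∈ s <;> by_cases hv : v ∈ s <;>
      simp only [hu, hv, if_true, if_false, if_pos, if_neg, not_false_iff] at hc ⊢
    · -- both in s, color 1
      have hnadj : ¬ (pathGraph n).Adj u v := fun hadj => ((hs1 u v hadj).mp hu) hv
      rw [SimpleGraph.pathGraph_adj] at hnadj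
      have hge := wdist_ge_dist hA u v (d := 2) (by omega)
      calc ((1 : ℕ) : ℕ∞) < ((2 : ℕ) : ℕ∞) := by exact_mod_cast Nat.lt_succ_self 1
        _ ≤ wdist A u v := hge
    · exact absurd hc (by omega)
    · exact absurd hc (by omega)
    · -- both not in s, color 2
      have hnadj : ¬ (pathGraph n).Adj u v := fun hadj => hu ((hs1 u v hadj).mpr hv)
      rw [SimpleGraph.pathGraph_adj] at hnadj
      have key : (3 : ℕ∞) ≤ wdist A u v := by
        by_cases h2 : (u : ℕ) + 2 = v ∨ (v : ℕ) + 2 = u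
        · rcases h2 with h2 | h2
          · apply wdist_ge_three hA h2
            intro w hwv
            apply hs2
            have hadj : (pathGraph n).Adj u w :=
              SimpleGraph.pathGraph_adj.mpr (Or.inl hwv.symm)
            by_contra hws
            exact hu ((hs1 u w hadj).mpr hws)
          · rw [wdist_comm]
            apply wdist_ge_three hA h2
            intro w hwv
            apply hs2
            have hadj : (pathGraph n).Adj v w :=
              SimpleGraph.pathGraph_adj.mpr (Or.inl hwv.symm)
            by_contra hws
            exact hv ((hs1 v w hadj).mpr hws)
        · have := wdist_ge_dist hA u v (d := 3) (by omega)
          exact_mod_cast this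
      calc ((2 : ℕ) : ℕ∞) < ((3 : ℕ) : ℕ∞) := by exact_mod_cast Nat.lt_succ_self 2
        _ ≤ wdist A u v := by exact_mod_cast key

lemma wdist_le_one_of_adj {n : ℕ} {A : Fin n → Fin n → Prop}
    (hA : IsOrientation (pathGraph n) A) {u v : Fin n} (hadj : (pathGraph n).Adj u v) :
    wdist A u v ≤ (1 : ℕ∞) := by
  rcases (hA.2 u v).mp hadj with h | h
  · exact_mod_cast wdist_le_of_dpath (m := 1) (Or.inl ⟨v, h, rfl⟩)
  · exact_mod_cast wdist_le_of_dpath (m := 1) (Or.inr ⟨u, h, rfl⟩)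

lemma adj_ne_color {n : ℕ} {A : Fin n → Fin n → Prop}
    (hA : IsOrientation (pathGraph n) A) {k : ℕ} {c : Fin n → ℕ}
    (hc : IsDPackingColoring A k c) {u v : Fin n} (hadj : (pathGraph n).Adj u v) :
    c u ≠ c v := by
  intro heq
  have hlt := hc.2 u v hadj.ne heq
  have h1 : ((1 : ℕ) : ℕ∞) ≤ (c u : ℕ∞) := by exact_mod_cast (hc.1 u).1
  have := h1.trans_lt (hlt.trans_le (wdist_le_one_of_adj hA hadj))
  simp at this

lemma s_of_coloring {n : ℕ} {A : Fin n → Fin n → Prop}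
    (hA : IsOrientation (pathGraph n) A) {c : Fin n → ℕ}
    (hc : IsDPackingColoring A 2 c) :
    ∃ s : Set (Fin n), (∀ u v : Fin n, (pathGraph n).Adj u v → (u ∈ s ↔ v ∉ s)) ∧
      ∀ v ∈ s, IsSource A v ∨ IsSink A v := by
  refine ⟨{v | c v = 1}, ?_, ?_⟩
  · intro u v hadj
    have h := adj_ne_color hA hc hadj
    have h1 := hc.1 u
    have h2 := hc.1 v
    simp only [Set.mem_setOf_eq]
    omega
  · intro v hv
    simp only [Set.mem_setOf_eq] at hv
    by_contra hcon
    push_neg at hcon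
    obtain ⟨hns, hnk⟩ := hcon
    simp only [IsSource, IsSink, not_forall, not_not] at hns hnk
    obtain ⟨a, ha⟩ := hns
    obtain ⟨b, hb⟩ := hnk
    have hab : a ≠ b := by
      rintro rfl
      exact hA.1 a v ha (by exact hb)
    have hadj_av : (pathGraph n).Adj a v := (hA.2 a v).mpr (Or.inl ha)
    have hadj_vb : (pathGraph n).Adj v b := (hA.2 v b).mpr (Or.inl hb)
    have hca : c a = 2 := by
      have := adj_ne_color hA hc hadj_av
      have h1 := hc.1 a
      omega
    have hcb : c b = 2 := by
      have := adj_ne_color hA hc hadj_vb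
      have h1 := hc.1 b
      omega
    have hlt := hc.2 a b hab (by omega)
    have hle : wdist A a b ≤ ((2 : ℕ) : ℕ∞) :=
      wdist_le_of_dpath (m := 2) (Or.inl ⟨v, ha, b, hb, rfl⟩)
    rw [hca] at hlt
    have := hlt.trans_le hle
    exact absurd this (by norm_num)

lemma two_le_mem {n : ℕ} {A : Fin n → Fin n → Prop}
    (hA : IsOrientation (pathGraph n) A) (hn : 2 ≤ n) {k : ℕ} {c : Fin n → ℕ}
    (hc : IsDPackingColoring A k c) : 2 ≤ k := by
  by_contra h
  push_neg at h
  have h0 := hc.1 ⟨0, by omega⟩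
  have h1 := hc.1 ⟨1, by omega⟩
  have hcc : c ⟨0, by omega⟩ = c ⟨1, by omega⟩ := by omega
  have hne : (⟨0, by omega⟩ : Fin n) ≠ ⟨1, by omega⟩ := by
    simp [Fin.ext_iff]
  have hlt := hc.2 _ _ hne hcc
  have hadj : (pathGraph n).Adj ⟨0, by omega⟩ ⟨1, by omega⟩ :=
    SimpleGraph.pathGraph_adj.mpr (Or.inl rfl)
  have hle := wdist_le_one_of_adj hA hadj
  have hone : ((1 : ℕ) : ℕ∞) ≤ (c (⟨0, by omega⟩ : Fin n) : ℕ∞) := by exact_mod_cast h0.1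
  have := hone.trans_lt (hlt.trans_le hle)
  simp at this

end AuxLemmas

theorem dpacking_oriented_path (n : ℕ) (hn : 2 ≤ n) (A : Fin n → Fin n → Prop)
    (hA : IsOrientation (pathGraph n) A) :
    2 ≤ dPackingChromaticNumber A ∧ dPackingChromaticNumber A ≤ 3 ∧
    (dPackingChromaticNumber A = 2 ↔
      ∃ s : Set (Fin n), (∀ u v : Fin n, (pathGraph n).Adj u v → (u ∈ s ↔ v ∉ s)) ∧
        ∀ v ∈ s, IsSource A v ∨ IsSink A v) := by
  obtain ⟨c3, hc3⟩ := exists_three_coloring hA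
  have hmem3 : 3 ∈ {k | ∃ c, IsDPackingColoring A k c} := ⟨c3, hc3⟩
  have hne : {k | ∃ c, IsDPackingColoring A k c}.Nonempty := ⟨3, hmem3⟩
  have hub : dPackingChromaticNumber A ≤ 3 := Nat.sInf_le hmem3
  have hlb : 2 ≤ dPackingChromaticNumber A := by
    apply le_csInf hne
    rintro k ⟨c, hc⟩
    exact two_le_mem hA hn hc
  refine ⟨hlb, hub, ?_, ?_⟩
  · intro h2
    have hm : dPackingChromaticNumber A ∈ {k | ∃ c, IsDPackingColoring A k c} :=
      Nat.sInf_mem hne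
    rw [h2] at hm
    obtain ⟨c, hc⟩ := hm
    exact s_of_coloring hA hc
  · rintro ⟨s, hs1, hs2⟩
    obtain ⟨c, hc⟩ := coloring_of_s hA hs1 hs2
    have h2 : dPackingChromaticNumber A ≤ 2 := Nat.sInf_le ⟨c, hc⟩
    omega
end
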